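/- Let G = γ₁ × γ₂ × ⋯ × γ_k be a torus admitting a Hamiltonian cycle, and let γ_{k+1} be a cycle graph whose number of vertices is a multiple of the number of vertices of γ_j for some j ≤ k. Then the (k+1)-dimensional torus G × γ_{k+1} admits a Hamiltonian cycle and mrl(G × γ_{k+1}) ≥ mrl(G). -/

import Mathlib

/-!
A torus is the Cartesian (box) product of cycle graphs `γ₁ × ⋯ × γ_k` where
`γ_i` is a cycle on `sz i ≥ 3` vertices.  We model its vertex set as
`∀ i, ZMod (sz i)`, with two vertices adjacent when they differ in exactly one
coordinate, by `±1` around that cycle.  A Hamiltonian cycle is a cyclic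
enumeration `f : ZMod N → V` (with `N` the number of vertices) which is
bijective and takes consecutive vertices to adjacent vertices.  The run length
of a Hamiltonian cycle is the largest `r ≥ 1` such that any `r` consecutive
edges contain at most one edge in any single dimension, and `mrl` is the
maximum run length over all Hamiltonian cycles.
-/

/-- Vertices of the torus with dimension sizes `sz`. -/
def TorusVtx (k : ℕ) (sz : Fin k → ℕ) : Type := ∀ i : Fin k, ZMod (sz i)

/-- The number of vertices of the torus with dimension sizes `sz`. -/
def torusCard (k : ℕ) (sz : Fin k → ℕ) : ℕ := ∏ i : Fin k, sz i

/-- Adjacency in the torus: the two vertices differ in exactly one coordinate,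
and there by one step around the corresponding cycle. -/
def TorusAdj {k : ℕ} {sz : Fin k → ℕ} (u v : TorusVtx k sz) : Prop :=
  ∃ i : Fin k, (v i = u i + 1 ∨ u i = v i + 1) ∧ ∀ j : Fin k, j ≠ i → u j = v j

/-- A Hamiltonian cycle of the torus, as a cyclic enumeration of all of its
vertices in which consecutive vertices are adjacent. -/
def IsHamCycle {k : ℕ} {sz : Fin k → ℕ}
    (f : ZMod (torusCard k sz) → TorusVtx k sz) : Prop :=
  Function.Bijective f ∧ ∀ t, TorusAdj (f t) (f (t + 1))

/-- The edge of the cycle `f` at position `s` (joining `f s` to `f (s+1)`)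
is in dimension `i`, i.e. its endpoints differ in coordinate `i`. -/
def EdgeInDim {k : ℕ} {sz : Fin k → ℕ}
    (f : ZMod (torusCard k sz) → TorusVtx k sz) (i : Fin k)
    (s : ZMod (torusCard k sz)) : Prop :=
  f s i ≠ f (s + 1) i

/-- Any `r` consecutive edges of the cycle `f` (read cyclically) contain at
most one edge in any single dimension. -/
def WindowOk {k : ℕ} {sz : Fin k → ℕ}
    (f : ZMod (torusCard k sz) → TorusVtx k sz) (r : ℕ) : Prop :=
  ∀ (t : ZMod (torusCard k sz)) (i : Fin k) (a b : ℕ), a < r → b < r → a ≠ b →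
    ¬(EdgeInDim f i (t + (a : ZMod (torusCard k sz))) ∧
      EdgeInDim f i (t + (b : ZMod (torusCard k sz))))

/-- The run length of a Hamiltonian cycle: the largest `r ≥ 1` such that any
`r` consecutive edges contain at most one edge in any single dimension. -/
noncomputable def runLength {k : ℕ} {sz : Fin k → ℕ}
    (f : ZMod (torusCard k sz) → TorusVtx k sz) : ℕ :=
  sSup {r : ℕ | 1 ≤ r ∧ WindowOk f r}

/-- The maximum run length of the torus: the maximum of `runLength` over all
of its Hamiltonian cycles. -/
noncomputable def mrl (k : ℕ) (sz : Fin k → ℕ) : ℕ :=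
  sSup {m : ℕ | ∃ f, IsHamCycle (k := k) (sz := sz) f ∧ m = runLength f}


/- ======== auxiliary constructions ======== -/


private def cAux (N s0 T : ℕ) : ℕ := (T + (N - 1 - s0)) / N

private lemma cAux_succ {N : ℕ} (s0 : ℕ) (hN : 0 < N) (hs0 : s0 < N) (T : ℕ) :
    cAux N s0 (T + 1) = cAux N s0 T + (if T % N = s0 then 1 else 0) := by
  unfold cAux
  rw [show T + 1 + (N - 1 - s0) = T + (N - 1 - s0) + 1 by omega, Nat.succ_div]
  congr 1
  have hdm := Nat.div_add_mod T N
  have hmod : T % N < N := Nat.mod_lt _ hN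
  by_cases hc : T % N = s0
  · rw [if_pos hc, if_pos]
    exact ⟨T / N + 1, by rw [Nat.mul_add, Nat.mul_one]; omega⟩
  · rw [if_neg hc, if_neg]
    rintro ⟨q, hq⟩
    have h1 : N * q = N * (T / N) + (T % N + (N - s0)) := by omega
    have h2 : T / N + 1 ≤ q := by
      by_contra h
      have h3 : N * q ≤ N * (T / N) := Nat.mul_le_mul_left N (by omega)
      omega
    have h4 : q ≤ T / N + 1 := by
      by_contra h
      have h5 : N * (T / N + 2) ≤ N * q := Nat.mul_le_mul_left N (by omega)
      rw [Nat.mul_add] at h5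
      omega
    have h6 : q = T / N + 1 := by omega
    rw [h6, Nat.mul_add, Nat.mul_one] at h1
    omega

private lemma cAux_add_mul {N : ℕ} (s0 : ℕ) (hN : 0 < N) (T q : ℕ) :
    cAux N s0 (T + N * q) = cAux N s0 T + q := by
  unfold cAux
  rw [show T + N * q + (N - 1 - s0) = T + (N - 1 - s0) + N * q by ring,
    Nat.add_mul_div_left _ _ hN]

private lemma torusCard_snoc (k : ℕ) (sz : Fin k → ℕ) (m : ℕ) :
    torusCard (k + 1) (Fin.snoc sz m) = torusCard k sz * m := by
  unfold torusCard
  rw [Fin.prod_univ_castSucc]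
  simp [Fin.snoc_castSucc, Fin.snoc_last]

private def AAux (k : ℕ) (sz : Fin k → ℕ)
    (f : ZMod (torusCard k sz) → TorusVtx k sz) (j : Fin k) (e : ℤ) (s0 : ℕ)
    (T : ℕ) (i' : Fin (k + 1)) : ℤ :=
  if h : (i' : ℕ) < k then
    ((f (T : ZMod (torusCard k sz)) ⟨(i' : ℕ), h⟩).val : ℤ) -
      (if (⟨(i' : ℕ), h⟩ : Fin k) = j then e * cAux (torusCard k sz) s0 T else 0)
  else e * cAux (torusCard k sz) s0 T

private def gAux (k : ℕ) (sz : Fin k → ℕ) (m : ℕ)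
    (f : ZMod (torusCard k sz) → TorusVtx k sz) (j : Fin k) (e : ℤ) (s0 : ℕ) :
    ZMod (torusCard (k + 1) (Fin.snoc sz m)) → TorusVtx (k + 1) (Fin.snoc sz m) :=
  fun t i' => (Int.cast (AAux k sz f j e s0 t.val i') : ZMod (Fin.snoc (α := fun _ => ℕ) sz m i'))

private lemma AAux_castSucc (k : ℕ) (sz : Fin k → ℕ)
    (f : ZMod (torusCard k sz) → TorusVtx k sz) (j : Fin k) (e : ℤ) (s0 : ℕ)
    (T : ℕ) (i : Fin k) :
    AAux k sz f j e s0 T (Fin.castSucc i) =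
      ((f (T : ZMod (torusCard k sz)) i).val : ℤ) -
        (if i = j then e * cAux (torusCard k sz) s0 T else 0) := by
  have h : ((Fin.castSucc i : Fin (k + 1)) : ℕ) < k := by simpa using i.isLt
  have h2 : (⟨((Fin.castSucc i : Fin (k + 1)) : ℕ), h⟩ : Fin k) = i := by ext; simp
  unfold AAux
  rw [dif_pos h, h2]

private lemma AAux_last (k : ℕ) (sz : Fin k → ℕ)
    (f : ZMod (torusCard k sz) → TorusVtx k sz) (j : Fin k) (e : ℤ) (s0 : ℕ)
    (T : ℕ) :
    AAux k sz f j e s0 T (Fin.last k) = e * cAux (torusCard k sz) s0 T := by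
  unfold AAux
  rw [dif_neg]
  simp

private lemma mrl_key (k : ℕ) (sz : Fin k → ℕ) (hsz : ∀ i, 3 ≤ sz i)
    (m : ℕ) (hm : 3 ≤ m) (j : Fin k) (hdvd : sz j ∣ m)
    (f : ZMod (torusCard k sz) → TorusVtx k sz) (hf : IsHamCycle f) :
    ∃ g : ZMod (torusCard (k + 1) (Fin.snoc sz m)) → TorusVtx (k + 1) (Fin.snoc sz m),
      IsHamCycle g ∧ ∀ r, 1 ≤ r → r ≤ torusCard k sz → WindowOk f r → WindowOk g r := by
  have hN : 0 < torusCard k sz := Finset.prod_pos fun i _ => by have := hsz i; omega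
  haveI : NeZero (torusCard k sz) := ⟨hN.ne'⟩
  have hMval : torusCard (k + 1) (Fin.snoc sz m) = torusCard k sz * m := torusCard_snoc k sz m
  have hMpos : 0 < torusCard (k + 1) (Fin.snoc sz m) := by
    rw [hMval]; exact Nat.mul_pos hN (by omega)
  haveI : NeZero (torusCard (k + 1) (Fin.snoc sz m)) := ⟨hMpos.ne'⟩
  haveI : NeZero m := ⟨by omega⟩
  haveI hNZ : ∀ i' : Fin (k + 1), NeZero ((Fin.snoc sz m : Fin (k + 1) → ℕ) i') := fun i' => ⟨by
    induction i' using Fin.lastCases with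
    | last => simp only [Fin.snoc_last]; omega
    | cast i => simp only [Fin.snoc_castSucc]; have := hsz i; omega⟩
  haveI : ∀ i : Fin k, NeZero (sz i) := fun i => ⟨by have := hsz i; omega⟩
  -- there is an edge in dimension j
  have hedge : ∃ s : ZMod (torusCard k sz), f s j ≠ f (s + 1) j := by
    by_contra h
    push_neg at h
    have hconst : ∀ T : ℕ, f (T : ZMod (torusCard k sz)) j = f 0 j := by
      intro T
      induction T with
      | zero => simp
      | succ T ih =>
        rw [show ((T + 1 : ℕ) : ZMod (torusCard k sz)) = (T : ZMod (torusCard k sz)) + 1 by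
          push_cast; ring, ← h, ih]
    have hall : ∀ t : ZMod (torusCard k sz), f t j = f 0 j := fun t => by
      have := hconst t.val
      rwa [ZMod.natCast_val, ZMod.cast_id] at this
    obtain ⟨t, ht⟩ := hf.1.2 (Function.update (f 0) j (f 0 j + 1))
    have h2 : f t j = f 0 j + 1 := by rw [ht]; exact Function.update_self _ _ _
    rw [hall t] at h2
    haveI : Fact (1 < sz j) := ⟨by have := hsz j; omega⟩
    exact one_ne_zero (left_eq_add.mp h2)
  obtain ⟨s0, hs0edge⟩ := hedge
  obtain ⟨i0, hrel0, hoth0⟩ := hf.2 s0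
  have hi0 : i0 = j := by
    by_contra hne
    exact hs0edge (hoth0 j fun hh => hne hh.symm)
  subst hi0
  obtain ⟨e, he1, he⟩ : ∃ e : ℤ, (e = 1 ∨ e = -1) ∧
      f (s0 + 1) i0 = f s0 i0 + ((e : ℤ) : ZMod (sz i0)) := by
    rcases hrel0 with h | h
    · exact ⟨1, Or.inl rfl, by rw [h]; push_cast; ring⟩
    · exact ⟨-1, Or.inr rfl, by rw [h]; push_cast; ring⟩
  have hs0v : s0.val < torusCard k sz := s0.val_lt
  have hs0cast : ((s0.val : ℕ) : ZMod (torusCard k sz)) = s0 := by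
    rw [ZMod.natCast_val, ZMod.cast_id]
  have hspec : ∀ T : ℕ, T % torusCard k sz = s0.val ↔
      ((T : ℕ) : ZMod (torusCard k sz)) = s0 := by
    intro T
    constructor
    · intro h
      rw [← hs0cast, ZMod.natCast_eq_natCast_iff, Nat.ModEq, Nat.mod_eq_of_lt hs0v]
      exact h
    · intro h
      have h2 := congrArg ZMod.val h
      rwa [ZMod.val_natCast] at h2
  have hAcs : ∀ (T : ℕ) (i : Fin k), AAux k sz f i0 e s0.val T (Fin.castSucc i) =
      ((f (T : ZMod (torusCard k sz)) i).val : ℤ) -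
        (if i = i0 then e * cAux (torusCard k sz) s0.val T else 0) :=
    fun T i => AAux_castSucc k sz f i0 e s0.val T i
  have hAlast : ∀ T : ℕ, AAux k sz f i0 e s0.val T (Fin.last k) =
      e * cAux (torusCard k sz) s0.val T := fun T => AAux_last k sz f i0 e s0.val T
  have hcastT : ∀ T : ℕ, ((T + 1 : ℕ) : ZMod (torusCard k sz)) =
      ((T : ℕ) : ZMod (torusCard k sz)) + 1 := fun T => by push_cast; ring
  have hvalcast : ∀ (i : Fin k) (x : ZMod (sz i)), ((x.val : ℕ) : ZMod (sz i)) = x :=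
    fun i x => by rw [ZMod.natCast_val, ZMod.cast_id]
  -- periodicity
  have hper : ∀ (T : ℕ) (i' : Fin (k + 1)),
      ((AAux k sz f i0 e s0.val (T + torusCard k sz * m) i' : ℤ) :
        ZMod ((Fin.snoc sz m : Fin (k + 1) → ℕ) i')) =
      ((AAux k sz f i0 e s0.val T i' : ℤ) : ZMod ((Fin.snoc sz m : Fin (k + 1) → ℕ) i')) := by
    intro T i'
    have hc2 : cAux (torusCard k sz) s0.val (T + torusCard k sz * m) =
        cAux (torusCard k sz) s0.val T + m := cAux_add_mul s0.val hN T m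
    have hTN : ((T + torusCard k sz * m : ℕ) : ZMod (torusCard k sz)) =
        ((T : ℕ) : ZMod (torusCard k sz)) := by
      push_cast
      simp [ZMod.natCast_self]
    induction i' using Fin.lastCases with
    | last =>
      rw [hAlast, hAlast, hc2, Fin.snoc_last]
      push_cast
      simp [ZMod.natCast_self]
    | cast i =>
      rw [hAcs, hAcs, hTN, hc2, Fin.snoc_castSucc]
      by_cases hij : i = i0
      · rw [if_pos hij, if_pos hij]
        have hm0 : ((m : ℕ) : ZMod (sz i)) = 0 := by
          rw [hij]
          exact (ZMod.natCast_eq_zero_iff m (sz i0)).mpr hdvd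
        push_cast
        rw [hm0]
        ring
      · rw [if_neg hij, if_neg hij]
  have hgapp : ∀ (s : ZMod (torusCard (k + 1) (Fin.snoc sz m))) (i' : Fin (k + 1)),
      gAux k sz m f i0 e s0.val s i' =
        ((AAux k sz f i0 e s0.val s.val i' : ℤ) : ZMod ((Fin.snoc sz m : Fin (k + 1) → ℕ) i')) :=
    fun s i' => rfl
  have hgsucc : ∀ (s : ZMod (torusCard (k + 1) (Fin.snoc sz m))) (i' : Fin (k + 1)),
      gAux k sz m f i0 e s0.val (s + 1) i' =
        ((AAux k sz f i0 e s0.val (s.val + 1) i' : ℤ) :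
          ZMod ((Fin.snoc sz m : Fin (k + 1) → ℕ) i')) := by
    intro s i'
    rw [hgapp]
    have h1 : (s + 1).val = (s.val + 1) % torusCard (k + 1) (Fin.snoc sz m) := by
      conv_lhs => rw [show s + 1 = ((s.val + 1 : ℕ) : ZMod (torusCard (k + 1) (Fin.snoc sz m))) by
        rw [Nat.cast_add, Nat.cast_one, ZMod.natCast_val, ZMod.cast_id]]
      rw [ZMod.val_natCast]
    rcases lt_or_ge (s.val + 1) (torusCard (k + 1) (Fin.snoc sz m)) with h2 | h2
    · rw [h1, Nat.mod_eq_of_lt h2]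
    · have h3 : s.val + 1 = torusCard (k + 1) (Fin.snoc sz m) := by
        have := s.val_lt
        omega
      rw [h1, h3, Nat.mod_self]
      have h4 := hper 0 i'
      rw [zero_add, ← hMval] at h4
      exact h4.symm
  -- the step relation
  have hstep : ∀ T : ℕ, ∃ i' : Fin (k + 1),
      (((AAux k sz f i0 e s0.val (T + 1) i' : ℤ) : ZMod ((Fin.snoc sz m : Fin (k + 1) → ℕ) i')) =
          ((AAux k sz f i0 e s0.val T i' : ℤ) : ZMod ((Fin.snoc sz m : Fin (k + 1) → ℕ) i')) + 1 ∨
        ((AAux k sz f i0 e s0.val T i' : ℤ) : ZMod ((Fin.snoc sz m : Fin (k + 1) → ℕ) i')) =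
          ((AAux k sz f i0 e s0.val (T + 1) i' : ℤ) :
            ZMod ((Fin.snoc sz m : Fin (k + 1) → ℕ) i')) + 1) ∧
      ∀ j' : Fin (k + 1), j' ≠ i' →
        ((AAux k sz f i0 e s0.val T j' : ℤ) : ZMod ((Fin.snoc sz m : Fin (k + 1) → ℕ) j')) =
          ((AAux k sz f i0 e s0.val (T + 1) j' : ℤ) :
            ZMod ((Fin.snoc sz m : Fin (k + 1) → ℕ) j')) := by
    intro T
    by_cases hsp : T % torusCard k sz = s0.val
    · -- special edge: new dimension
      have hc1 : cAux (torusCard k sz) s0.val (T + 1) = cAux (torusCard k sz) s0.val T + 1 := by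
        rw [cAux_succ s0.val hN hs0v, if_pos hsp]
      have hT : ((T : ℕ) : ZMod (torusCard k sz)) = s0 := (hspec T).mp hsp
      refine ⟨Fin.last k, ?_, ?_⟩
      · rw [hAlast, hAlast, hc1]
        rcases he1 with rfl | rfl
        · left; push_cast; ring
        · right; push_cast; ring
      · intro j' hj'
        obtain ⟨i, rfl⟩ : ∃ i : Fin k, j' = Fin.castSucc i := by
          obtain ⟨i, hi⟩ := Fin.exists_castSucc_eq.mpr hj'
          exact ⟨i, hi.symm⟩
        rw [hAcs, hAcs, hcastT, hT]
        by_cases hij : i = i0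
        · subst hij
          rw [if_pos rfl, if_pos rfl, hc1, Fin.snoc_castSucc]
          push_cast
          rw [hvalcast, hvalcast, he]
          push_cast
          ring
        · rw [if_neg hij, if_neg hij, Fin.snoc_castSucc]
          push_cast
          rw [hvalcast, hvalcast, hoth0 i hij]
    · -- ordinary edge: same dimension as f
      have hc1 : cAux (torusCard k sz) s0.val (T + 1) = cAux (torusCard k sz) s0.val T := by
        rw [cAux_succ s0.val hN hs0v, if_neg hsp]
        omega
      obtain ⟨i1, hrel, hoth⟩ := hf.2 ((T : ℕ) : ZMod (torusCard k sz))
      refine ⟨Fin.castSucc i1, ?_, ?_⟩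
      · rw [hAcs, hAcs, hc1, hcastT, Fin.snoc_castSucc]
        by_cases hij : i1 = i0
        · subst hij
          rw [if_pos rfl]
          rcases hrel with h | h
          · left; push_cast; rw [hvalcast, hvalcast, h]; push_cast; ring
          · right; push_cast; rw [hvalcast, hvalcast, h]; push_cast; ring
        · rw [if_neg hij]
          rcases hrel with h | h
          · left; push_cast; rw [hvalcast, hvalcast, h]; push_cast; ring
          · right; push_cast; rw [hvalcast, hvalcast, h]; push_cast; ring
      · intro j' hj'
        by_cases hlast : j' = Fin.last k
        · subst hlast
          rw [hAlast, hAlast, hc1]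
        · obtain ⟨i, rfl⟩ : ∃ i : Fin k, j' = Fin.castSucc i := by
            obtain ⟨i, hi⟩ := Fin.exists_castSucc_eq.mpr hlast
            exact ⟨i, hi.symm⟩
          have hii1 : i ≠ i1 := fun hh => hj' (by rw [hh])
          have hfi := hoth i hii1
          rw [hAcs, hAcs, hcastT, hc1, Fin.snoc_castSucc]
          by_cases hij : i = i0
          · rw [if_pos hij]
            push_cast
            rw [hvalcast, hvalcast, hfi]
          · rw [if_neg hij]
            push_cast
            rw [hvalcast, hvalcast, hfi]
  -- adjacency
  have hadj : ∀ t, TorusAdj (gAux k sz m f i0 e s0.val t) (gAux k sz m f i0 e s0.val (t + 1)) := by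
    intro t
    obtain ⟨i', hrel, hoth⟩ := hstep t.val
    refine ⟨i', ?_, ?_⟩
    · rw [hgsucc t i', hgapp t i']
      exact hrel
    · intro j' hj'
      rw [hgsucc t j', hgapp t j']
      exact hoth j' hj'
  -- injectivity
  have hinj : Function.Injective (gAux k sz m f i0 e s0.val) := by
    intro t t' hgt
    have hcoord : ∀ i' : Fin (k + 1),
        ((AAux k sz f i0 e s0.val t.val i' : ℤ) : ZMod ((Fin.snoc sz m : Fin (k + 1) → ℕ) i')) =
        ((AAux k sz f i0 e s0.val t'.val i' : ℤ) :
          ZMod ((Fin.snoc sz m : Fin (k + 1) → ℕ) i')) := by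
      intro i'
      rw [← hgapp t i', ← hgapp t' i', hgt]
    have hlastc := hcoord (Fin.last k)
    rw [hAlast, hAlast, Fin.snoc_last] at hlastc
    have he2 : e * e = 1 := by rcases he1 with rfl | rfl <;> norm_num
    have hcm : ((cAux (torusCard k sz) s0.val t.val : ℤ) : ZMod m) =
        ((cAux (torusCard k sz) s0.val t'.val : ℤ) : ZMod m) := by
      have h4 := congrArg (fun x : ZMod m => ((e : ℤ) : ZMod m) * x) hlastc
      simp only [← Int.cast_mul, ← mul_assoc, he2, one_mul] at h4
      exact h4
    have hcn : ((cAux (torusCard k sz) s0.val t.val : ℤ) : ZMod (sz i0)) =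
        ((cAux (torusCard k sz) s0.val t'.val : ℤ) : ZMod (sz i0)) := by
      have h5 := congrArg (ZMod.castHom hdvd (ZMod (sz i0))) hcm
      simpa using h5
    have hfeq : f ((t.val : ℕ) : ZMod (torusCard k sz)) = f ((t'.val : ℕ) : ZMod (torusCard k sz)) := by
      funext i
      have hci := hcoord (Fin.castSucc i)
      rw [hAcs, hAcs, Fin.snoc_castSucc] at hci
      by_cases hij : i = i0
      · subst hij
        rw [if_pos rfl, if_pos rfl] at hci
        push_cast at hci hcn
        rw [hvalcast, hvalcast] at hci
        rw [hcn] at hci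
        exact sub_left_inj.mp hci
      · rw [if_neg hij, if_neg hij] at hci
        push_cast [sub_zero] at hci
        rw [hvalcast, hvalcast] at hci
        exact hci
    have hTbar := hf.1.1 hfeq
    have hrho : t.val % torusCard k sz = t'.val % torusCard k sz := by
      have h6 := congrArg ZMod.val hTbar
      rwa [ZMod.val_natCast, ZMod.val_natCast] at h6
    have h7 : t.val = t.val % torusCard k sz + torusCard k sz * (t.val / torusCard k sz) := by
      have := Nat.div_add_mod t.val (torusCard k sz)
      omega
    have h7' : t'.val = t'.val % torusCard k sz + torusCard k sz * (t'.val / torusCard k sz) := by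
      have := Nat.div_add_mod t'.val (torusCard k sz)
      omega
    have h8 := cAux_add_mul (N := torusCard k sz) s0.val hN (t.val % torusCard k sz)
      (t.val / torusCard k sz)
    have h8' := cAux_add_mul (N := torusCard k sz) s0.val hN (t'.val % torusCard k sz)
      (t'.val / torusCard k sz)
    rw [← h7] at h8
    rw [← h7'] at h8'
    rw [h8, h8', hrho] at hcm
    have h9 : ((t.val / torusCard k sz : ℕ) : ZMod m) = ((t'.val / torusCard k sz : ℕ) : ZMod m) := by
      revert hcm
      generalize t.val / torusCard k sz = q
      generalize t'.val / torusCard k sz = q'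
      intro hcm
      push_cast at hcm
      exact add_left_cancel hcm
    have hq : t.val / torusCard k sz = t'.val / torusCard k sz := by
      have h10 := congrArg ZMod.val h9
      rw [ZMod.val_natCast, ZMod.val_natCast] at h10
      have hq1 : t.val / torusCard k sz < m := by
        refine (Nat.div_lt_iff_lt_mul hN).mpr ?_
        have h11 := t.val_lt
        rw [Nat.mul_comm]
        omega
      have hq2 : t'.val / torusCard k sz < m := by
        refine (Nat.div_lt_iff_lt_mul hN).mpr ?_
        have h11 := t'.val_lt
        rw [Nat.mul_comm]
        omega
      rwa [Nat.mod_eq_of_lt hq1, Nat.mod_eq_of_lt hq2] at h10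
    have hvv : t.val = t'.val := by
      rw [hrho, hq] at h7
      omega
    exact ZMod.val_injective _ hvv
  -- bijectivity
  have hbij : Function.Bijective (gAux k sz m f i0 e s0.val) := by
    letI : Fintype (TorusVtx (k + 1) (Fin.snoc sz m)) :=
      inferInstanceAs (Fintype (∀ i' : Fin (k + 1), ZMod ((Fin.snoc sz m : Fin (k + 1) → ℕ) i')))
    rw [Fintype.bijective_iff_injective_and_card]
    refine ⟨hinj, ?_⟩
    rw [ZMod.card]
    show torusCard (k + 1) (Fin.snoc sz m) =
      Fintype.card (∀ i' : Fin (k + 1), ZMod ((Fin.snoc sz m : Fin (k + 1) → ℕ) i'))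
    rw [Fintype.card_pi]
    simp only [ZMod.card]
    rfl
  -- projection to ZMod N is additive on positions
  have hdvdNM : torusCard k sz ∣ torusCard (k + 1) (Fin.snoc sz m) := ⟨m, hMval⟩
  have hproj : ∀ x : ℕ, ((x % torusCard (k + 1) (Fin.snoc sz m) : ℕ) : ZMod (torusCard k sz)) =
      ((x : ℕ) : ZMod (torusCard k sz)) :=
    fun x => (ZMod.natCast_eq_natCast_iff _ _ _).mpr
      ((Nat.mod_modEq x (torusCard (k + 1) (Fin.snoc sz m))).of_dvd hdvdNM)
  have hvaladd : ∀ (t : ZMod (torusCard (k + 1) (Fin.snoc sz m))) (a : ℕ),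
      (((t + (a : ZMod (torusCard (k + 1) (Fin.snoc sz m)))).val : ℕ) : ZMod (torusCard k sz)) =
        ((t.val : ℕ) : ZMod (torusCard k sz)) + a := by
    intro t a
    rw [show t + (a : ZMod (torusCard (k + 1) (Fin.snoc sz m))) =
        ((t.val + a : ℕ) : ZMod (torusCard (k + 1) (Fin.snoc sz m))) by
      rw [Nat.cast_add, ZMod.natCast_val, ZMod.cast_id]]
    rw [ZMod.val_natCast, hproj]
    push_cast
    ring
  -- edge characterizations
  have hEcs : ∀ (s : ZMod (torusCard (k + 1) (Fin.snoc sz m))) (i : Fin k),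
      EdgeInDim (gAux k sz m f i0 e s0.val) (Fin.castSucc i) s →
        EdgeInDim f i ((s.val : ℕ) : ZMod (torusCard k sz)) := by
    intro s i hE
    have hE2 : ¬ gAux k sz m f i0 e s0.val s (Fin.castSucc i) =
        gAux k sz m f i0 e s0.val (s + 1) (Fin.castSucc i) := hE
    rw [hgapp, hgsucc, hAcs, hAcs, Fin.snoc_castSucc, hcastT] at hE2
    intro hEq
    apply hE2
    by_cases hij : i = i0
    · subst hij
      by_cases hsp : s.val % torusCard k sz = s0.val
      · exfalso
        have hT : ((s.val : ℕ) : ZMod (torusCard k sz)) = s0 := (hspec _).mp hsp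
        rw [hT] at hEq
        exact hs0edge hEq
      · have hc1 : cAux (torusCard k sz) s0.val (s.val + 1) =
            cAux (torusCard k sz) s0.val s.val := by
          rw [cAux_succ s0.val hN hs0v, if_neg hsp]
          omega
        rw [if_pos rfl, if_pos rfl, hc1]
        push_cast
        rw [hvalcast, hvalcast, hEq]
    · rw [if_neg hij, if_neg hij]
      push_cast
      rw [hvalcast, hvalcast, hEq]
  have hElast : ∀ s : ZMod (torusCard (k + 1) (Fin.snoc sz m)),
      EdgeInDim (gAux k sz m f i0 e s0.val) (Fin.last k) s →
        ((s.val : ℕ) : ZMod (torusCard k sz)) = s0 := by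
    intro s hE
    have hE2 : ¬ gAux k sz m f i0 e s0.val s (Fin.last k) =
        gAux k sz m f i0 e s0.val (s + 1) (Fin.last k) := hE
    rw [hgapp, hgsucc, hAlast, hAlast] at hE2
    by_cases hsp : s.val % torusCard k sz = s0.val
    · exact (hspec _).mp hsp
    · exfalso
      have hc1 : cAux (torusCard k sz) s0.val (s.val + 1) =
          cAux (torusCard k sz) s0.val s.val := by
        rw [cAux_succ s0.val hN hs0v, if_neg hsp]
        omega
      exact hE2 (by rw [hc1])
  -- windows are preserved
  have hwin : ∀ r, 1 ≤ r → r ≤ torusCard k sz → WindowOk f r →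
      WindowOk (gAux k sz m f i0 e s0.val) r := by
    intro r hr1 hrN hw t i' a b ha hb hab hconj
    obtain ⟨hEa, hEb⟩ := hconj
    by_cases hlast : i' = Fin.last k
    · subst hlast
      have h1 := hElast _ hEa
      have h2 := hElast _ hEb
      rw [hvaladd] at h1 h2
      have h3 : ((a : ℕ) : ZMod (torusCard k sz)) = ((b : ℕ) : ZMod (torusCard k sz)) :=
        add_left_cancel (h1.trans h2.symm)
      have h4 := congrArg ZMod.val h3
      rw [ZMod.val_natCast, ZMod.val_natCast, Nat.mod_eq_of_lt (by omega),
        Nat.mod_eq_of_lt (by omega)] at h4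
      exact hab h4
    · obtain ⟨i, rfl⟩ : ∃ i : Fin k, i' = Fin.castSucc i := by
        obtain ⟨i, hi⟩ := Fin.exists_castSucc_eq.mpr hlast
        exact ⟨i, hi.symm⟩
      have h1 := hEcs _ _ hEa
      have h2 := hEcs _ _ hEb
      rw [hvaladd] at h1 h2
      exact hw ((t.val : ℕ) : ZMod (torusCard k sz)) i a b ha hb hab ⟨h1, h2⟩
  exact ⟨gAux k sz m f i0 e s0.val, ⟨hbij, hadj⟩, hwin⟩

private lemma runLength_le_card {k : ℕ} {sz : Fin k → ℕ} (hsz : ∀ i, 3 ≤ sz i)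
    {f : ZMod (torusCard k sz) → TorusVtx k sz} (hf : IsHamCycle f)
    {r : ℕ} (h1 : 1 ≤ r) (hw : WindowOk f r) : r ≤ torusCard k sz := by
  have hN : 0 < torusCard k sz := Finset.prod_pos fun i _ => by have := hsz i; omega
  by_contra hlt
  push_neg at hlt
  obtain ⟨i, hrel, -⟩ := hf.2 0
  have hE : EdgeInDim f i 0 := by
    haveI : Fact (1 < sz i) := ⟨by have := hsz i; omega⟩
    intro h
    rcases hrel with h2 | h2
    · rw [h] at h2
      exact one_ne_zero (left_eq_add.mp h2)
    · rw [← h] at h2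
      exact one_ne_zero (left_eq_add.mp h2)
  exact hw 0 i 0 (torusCard k sz) (by omega) (by omega) (by omega)
    ⟨by simpa using hE, by simpa [ZMod.natCast_self] using hE⟩

private lemma runLength_spec {k : ℕ} {sz : Fin k → ℕ} (hsz : ∀ i, 3 ≤ sz i)
    {f : ZMod (torusCard k sz) → TorusVtx k sz} (hf : IsHamCycle f) :
    1 ≤ runLength f ∧ WindowOk f (runLength f) ∧ runLength f ≤ torusCard k sz := by
  have h1 : (1 : ℕ) ∈ {r : ℕ | 1 ≤ r ∧ WindowOk f r} :=
    ⟨le_rfl, fun t i a b ha hb hab _ => hab (by omega)⟩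
  have hbdd : BddAbove {r : ℕ | 1 ≤ r ∧ WindowOk f r} :=
    ⟨torusCard k sz, fun r hr => runLength_le_card hsz hf hr.1 hr.2⟩
  have hmem : runLength f ∈ {r : ℕ | 1 ≤ r ∧ WindowOk f r} := Nat.sSup_mem ⟨1, h1⟩ hbdd
  exact ⟨hmem.1, hmem.2, runLength_le_card hsz hf hmem.1 hmem.2⟩


/-- **Theorem 3 (adding an extra dimension, multiple case).**  Let
`G = γ₁ × ⋯ × γ_k` be a torus admitting a Hamiltonian cycle, and let
`γ_{k+1}` be a cycle graph (on `m ≥ 3` vertices) whose number of vertices is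
a multiple of the number of vertices of `γ_j` for some `j ≤ k`.  Then the
`(k+1)`-dimensional torus `G × γ_{k+1}` admits a Hamiltonian cycle and
`mrl(G × γ_{k+1}) ≥ mrl(G)`. -/
theorem mrl_extra_dimension_of_multiple
    (k : ℕ) (sz : Fin k → ℕ) (hsz : ∀ i, 3 ≤ sz i)
    (hG : ∃ f, IsHamCycle (k := k) (sz := sz) f)
    (m : ℕ) (hm : 3 ≤ m)
    (hmul : ∃ j : Fin k, sz j ∣ m) :
    (∃ f, IsHamCycle (k := k + 1) (sz := Fin.snoc sz m) f) ∧
      mrl k sz ≤ mrl (k + 1) (Fin.snoc sz m) := by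
  obtain ⟨j, hdvd⟩ := hmul
  have hsz' : ∀ i' : Fin (k + 1), 3 ≤ (Fin.snoc sz m : Fin (k + 1) → ℕ) i' := fun i' => by
    induction i' using Fin.lastCases with
    | last => simpa using hm
    | cast i => simpa using hsz i
  obtain ⟨f0, hf0⟩ := hG
  obtain ⟨g0, hg0, -⟩ := mrl_key k sz hsz m hm j hdvd f0 hf0
  refine ⟨⟨g0, hg0⟩, ?_⟩
  have hbdd1 : BddAbove {x : ℕ | ∃ g, IsHamCycle (k := k + 1) (sz := Fin.snoc sz m) g ∧
      x = runLength g} := by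
    refine ⟨torusCard (k + 1) (Fin.snoc sz m), ?_⟩
    rintro x ⟨g, hg, rfl⟩
    exact (runLength_spec hsz' hg).2.2
  have hne : {x : ℕ | ∃ f, IsHamCycle (k := k) (sz := sz) f ∧ x = runLength f}.Nonempty :=
    ⟨runLength f0, f0, hf0, rfl⟩
  refine csSup_le hne ?_
  rintro x ⟨f, hf, rfl⟩
  obtain ⟨g, hg, hwin⟩ := mrl_key k sz hsz m hm j hdvd f hf
  obtain ⟨h1, h2, h3⟩ := runLength_spec hsz hf
  have h4 : WindowOk g (runLength f) := hwin _ h1 h3 h2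
  have h5 : runLength f ≤ runLength g :=
    le_csSup ⟨torusCard (k + 1) (Fin.snoc sz m),
      fun r hr => runLength_le_card hsz' hg hr.1 hr.2⟩ ⟨h1, h4⟩
  exact h5.trans (le_csSup hbdd1 ⟨g, hg, rfl⟩)
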